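/- With G_0 = G and, for i = 1, …, k, o_i a scan order of G_{i−1} and F_i the earliest-neighbor forest of G_{i−1} with respect to o_i, the graph on V with edge set F_1 ∪ … ∪ F_k is k-connected if and only if G is k-connected. -/

import Mathlib

/-- A graph `H` on at least `k+1` vertices is `k`-connected if deleting any set of at most
`k-1` vertices leaves a connected graph. -/
def IsKConnected {V : Type*} [Fintype V] (k : ℕ) (H : SimpleGraph V) : Prop :=
  k + 1 ≤ Fintype.card V ∧
    ∀ S : Finset V, S.card ≤ k - 1 → (H.induce ((↑S : Set V)ᶜ)).Connected

/-- `o` is a scan order of `H`: an injective labelling such that every vertex that is not the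
`o`-minimal vertex of its connected component of `H` has a neighbor with a smaller label. -/
def IsScanOrder {V : Type*} (H : SimpleGraph V) (o : V → ℕ) : Prop :=
  Function.Injective o ∧
    ∀ v w, H.Reachable v w → o w < o v → ∃ x, H.Adj v x ∧ o x < o v

/-- The earliest-neighbor (scan-first search) forest of `H` with respect to `o`: for every
vertex `v` that is not the `o`-minimal vertex of its connected component of `H`, the edge
joining `v` to its neighbor `u` with `o u` minimal among all neighbors of `v`. -/
def earliestForest {V : Type*} (H : SimpleGraph V) (o : V → ℕ) : Set (Sym2 V) :=
  {e | ∃ v u, e = s(u, v) ∧ H.Adj v u ∧ (∃ w, H.Reachable v w ∧ o w < o v) ∧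
    ∀ x, H.Adj v x → o u ≤ o x}

/-- `Gseq G F i` is the graph `G_i` on `V` with edge set `E(G) \ (F 0 ∪ ⋯ ∪ F (i-1))`. -/
def Gseq {V : Type*} (G : SimpleGraph V) (F : ℕ → Set (Sym2 V)) (i : ℕ) : SimpleGraph V :=
  SimpleGraph.fromEdgeSet (G.edgeSet \ ⋃ j ∈ Finset.range i, F j)

set_option linter.unusedSectionVars false

namespace ScanProof
open SimpleGraph

variable {V : Type*} [Fintype V]
variable (G : SimpleGraph V) (F : ℕ → Set (Sym2 V))

lemma edgeSet_Gseq (i : ℕ) :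
    (Gseq G F i).edgeSet = G.edgeSet \ ⋃ j ∈ Finset.range i, F j := by
  rw [Gseq, edgeSet_fromEdgeSet]
  ext e
  simp only [Set.mem_diff, Set.mem_setOf_eq]
  constructor
  · rintro ⟨⟨h1, h2⟩, -⟩; exact ⟨h1, h2⟩
  · rintro ⟨h1, h2⟩
    exact ⟨⟨h1, h2⟩, fun hd => (G.not_isDiag_of_mem_edgeSet h1) hd⟩

lemma edgeSet_Gseq_anti {i j : ℕ} (hij : i ≤ j) :
    (Gseq G F j).edgeSet ⊆ (Gseq G F i).edgeSet := by
  rw [edgeSet_Gseq, edgeSet_Gseq]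
  intro e he
  refine ⟨he.1, fun hmem => he.2 ?_⟩
  simp only [Set.mem_iUnion] at hmem ⊢
  obtain ⟨t, ht, hte⟩ := hmem
  exact ⟨t, Finset.mem_range.mpr (lt_of_lt_of_le (Finset.mem_range.mp ht) hij), hte⟩

variable (k : ℕ) (o : ℕ → V → ℕ)
variable (hF : ∀ i < k, F i = earliestForest (Gseq G F i) (o i))

section Basic
include hF

lemma F_subset_edgeSet {i : ℕ} (hi : i < k) : F i ⊆ (Gseq G F i).edgeSet := by
  intro e he
  rw [hF i hi] at he
  obtain ⟨v, u, rfl, hadj, -, -⟩ := he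
  rw [Sym2.eq_swap]
  exact (Gseq G F i).mem_edgeSet.mpr hadj

lemma F_subset_G {i : ℕ} (hi : i < k) : F i ⊆ G.edgeSet := by
  intro e he
  have := F_subset_edgeSet G F k o hF hi he
  rw [edgeSet_Gseq] at this
  exact this.1

lemma F_disjoint {i j : ℕ} (hij : i < j) (hjk : j < k) (e : Sym2 V)
    (hei : e ∈ F i) (hej : e ∈ F j) : False := by
  have := F_subset_edgeSet G F k o hF hjk hej
  rw [edgeSet_Gseq] at this
  apply this.2
  simp only [Set.mem_iUnion]
  exact ⟨i, Finset.mem_range.mpr hij, hei⟩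

omit hF in
lemma F_notin_Gseq {i j : ℕ} (hij : i < j) (e : Sym2 V)
    (he : e ∈ (Gseq G F j).edgeSet) : e ∉ F i := by
  rw [edgeSet_Gseq] at he
  intro hei
  apply he.2
  simp only [Set.mem_iUnion]
  exact ⟨i, Finset.mem_range.mpr hij, hei⟩

end Basic


variable (hscan : ∀ i < k, IsScanOrder (Gseq G F i) (o i))

def IsMinIn (i : ℕ) (v : V) : Prop := ∀ w, (Gseq G F i).Reachable v w → o i v ≤ o i w

section Chains
include hscan hF

lemma exists_parent {i : ℕ} (hi : i < k) (v : V) (hv : ¬ IsMinIn G F o i v) :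
    ∃ p, (Gseq G F i).Adj v p ∧ s(p, v) ∈ F i ∧ o i p < o i v ∧
      ∀ x, (Gseq G F i).Adj v x → o i p ≤ o i x := by
  classical
  unfold IsMinIn at hv
  push_neg at hv
  obtain ⟨w, hr, hlt⟩ := hv
  obtain ⟨x, hxadj, hxlt⟩ := (hscan i hi).2 v w hr hlt
  obtain ⟨p, hpN, hpmin⟩ := Finset.exists_min_image
    (Finset.univ.filter (fun y => (Gseq G F i).Adj v y)) (o i)
    ⟨x, Finset.mem_filter.mpr ⟨Finset.mem_univ x, hxadj⟩⟩
  have hpadj : (Gseq G F i).Adj v p := (Finset.mem_filter.mp hpN).2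
  have hmin : ∀ y, (Gseq G F i).Adj v y → o i p ≤ o i y := fun y hy =>
    hpmin y (Finset.mem_filter.mpr ⟨Finset.mem_univ y, hy⟩)
  refine ⟨p, hpadj, ?_, lt_of_le_of_lt (hmin x hxadj) hxlt, hmin⟩
  rw [hF i hi]
  exact ⟨v, p, rfl, hpadj, ⟨w, hr, hlt⟩, hmin⟩

lemma min_unique {i : ℕ} (hi : i < k) {ρ ρ' : V} (h1 : IsMinIn G F o i ρ)
    (h2 : IsMinIn G F o i ρ') (hr : (Gseq G F i).Reachable ρ ρ') : ρ = ρ' :=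
  (hscan i hi).1 (le_antisymm (h1 ρ' hr) (h2 ρ hr.symm))

lemma chain_exists {i : ℕ} (hi : i < k) (c : V) :
    ∃ (L : List V) (ρ : V), L.head? = some c ∧ L.getLast? = some ρ ∧
      IsMinIn G F o i ρ ∧ (Gseq G F i).Reachable c ρ ∧
      List.Chain' (fun x y => s(x,y) ∈ F i ∧ o i y < o i x) L ∧
      L.Nodup ∧
      (∀ x ∈ L, o i x ≤ o i c) ∧
      (L.tail = [] ∨ ∃ p, (Gseq G F i).Adj c p ∧ s(p, c) ∈ F i ∧
        (∀ nb, (Gseq G F i).Adj c nb → o i p ≤ o i nb) ∧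
        ∀ x ∈ L.tail, o i x ≤ o i p) := by
  suffices Hs : ∀ n c, o i c ≤ n → ∃ (L : List V) (ρ : V), L.head? = some c ∧
      L.getLast? = some ρ ∧
      IsMinIn G F o i ρ ∧ (Gseq G F i).Reachable c ρ ∧
      List.Chain' (fun x y => s(x,y) ∈ F i ∧ o i y < o i x) L ∧
      L.Nodup ∧
      (∀ x ∈ L, o i x ≤ o i c) ∧
      (L.tail = [] ∨ ∃ p, (Gseq G F i).Adj c p ∧ s(p, c) ∈ F i ∧
        (∀ nb, (Gseq G F i).Adj c nb → o i p ≤ o i nb) ∧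
        ∀ x ∈ L.tail, o i x ≤ o i p) by
    exact Hs (o i c) c le_rfl
  intro n
  induction n with
  | zero =>
    intro c hc
    by_cases hmin : IsMinIn G F o i c
    · exact ⟨[c], c, rfl, rfl, hmin, Reachable.refl c, List.isChain_singleton c,
        List.nodup_singleton c, by simp, Or.inl rfl⟩
    · obtain ⟨p, -, -, hplt, -⟩ := exists_parent G F k o hF hscan hi c hmin
      omega
  | succ n IH =>
    intro c hc
    by_cases hmin : IsMinIn G F o i c
    · exact ⟨[c], c, rfl, rfl, hmin, Reachable.refl c, List.isChain_singleton c,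
        List.nodup_singleton c, by simp, Or.inl rfl⟩
    · obtain ⟨p, hpadj, hpF, hplt, hpmin⟩ := exists_parent G F k o hF hscan hi c hmin
      obtain ⟨Lp, ρ, hhead, hlast, hrmin, hreach, hchain, hnodup, hbound, -⟩ :=
        IH p (by omega)
      obtain ⟨p', t, rfl⟩ : ∃ p' t, Lp = p' :: t := by
        cases Lp with
        | nil => simp at hhead
        | cons a l => exact ⟨a, l, rfl⟩
      have hp' : p = p' := by symm; simpa using hhead
      subst hp'
      have hbound' : ∀ x ∈ p :: t, o i x < o i c :=
        fun x hx => lt_of_le_of_lt (hbound x hx) hplt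
      refine ⟨c :: p :: t, ρ, rfl, ?_, hrmin, (hpadj.reachable).trans hreach, ?_, ?_, ?_, ?_⟩
      · rw [List.getLast?_cons_cons]; exact hlast
      · exact List.isChain_cons_cons.mpr ⟨⟨by rw [Sym2.eq_swap]; exact hpF, hplt⟩, hchain⟩
      · exact List.nodup_cons.mpr ⟨fun hc' => absurd rfl (ne_of_lt (hbound' c hc')).symm, hnodup⟩
      · intro x hx
        rcases List.mem_cons.mp hx with rfl | hx'
        · exact le_rfl
        · exact le_of_lt (hbound' x hx')
      · exact Or.inr ⟨p, hpadj, hpF, hpmin, fun x hx => hbound x hx⟩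

end Chains


section Greedy

open scoped Classical

noncomputable def Tset (S : Finset V) : ℕ → Finset V
  | 0 => S
  | (j+1) => if h : (Tset S j).Nonempty then
      (Tset S j).erase (Classical.choose (Finset.exists_min_image (Tset S j) (o j) h))
      else ∅

omit [Fintype V] in
lemma Tset_succ_subset (S : Finset V) (j : ℕ) : Tset o S (j+1) ⊆ Tset o S j := by
  rw [Tset]
  split
  · exact Finset.erase_subset _ _
  · exact Finset.empty_subset _

omit [Fintype V] in
lemma Tset_subset (S : Finset V) {j j' : ℕ} (h : j ≤ j') : Tset o S j' ⊆ Tset o S j := by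
  induction j' with
  | zero => simp_all
  | succ m IH =>
    rcases Nat.lt_or_ge j (m+1) with hlt | hge
    · exact (Tset_succ_subset o S m).trans (IH (by omega))
    · have : j = m + 1 := by omega
      subst this; exact subset_rfl

omit [Fintype V] in
lemma Tset_card (S : Finset V) (j : ℕ) : (Tset o S j).card ≤ S.card - j := by
  induction j with
  | zero => simp [Tset]
  | succ m IH =>
    rw [Tset]
    split
    · next h =>
      have hmem := Classical.choose_spec (Finset.exists_min_image (Tset o S m) (o m) h)
      have := Finset.card_erase_of_mem hmem.1
      omega
    · simp

omit [Fintype V] in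
lemma Tset_notmem (S : Finset V) {z : V} (hz : z ∈ S) : z ∉ Tset o S S.card := by
  intro hmem
  have h1 : 0 < (Tset o S S.card).card := Finset.card_pos.mpr ⟨z, hmem⟩
  have h2 := Tset_card o S S.card
  omega

noncomputable def lev (S : Finset V) (z : V) : ℕ :=
  if hz : ∃ j, z ∉ Tset o S (j+1) then Nat.find hz else 0

omit [Fintype V] in
lemma lev_exists (S : Finset V) {z : V} (hz : z ∈ S) : ∃ j, z ∉ Tset o S (j+1) := by
  have hc : 0 < S.card := Finset.card_pos.mpr ⟨z, hz⟩
  exact ⟨S.card - 1, by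
    have := Tset_notmem o S hz
    have heq : S.card - 1 + 1 = S.card := by omega
    rw [heq]; exact this⟩

omit [Fintype V] in
lemma lev_lt_card (S : Finset V) {z : V} (hz : z ∈ S) : lev o S z < S.card := by
  rw [lev, dif_pos (lev_exists o S hz)]
  have hc : 0 < S.card := Finset.card_pos.mpr ⟨z, hz⟩
  have hfind : Nat.find (lev_exists o S hz) ≤ S.card - 1 := Nat.find_le (by
    have h2 := Tset_notmem o S hz
    have heq : S.card - 1 + 1 = S.card := by omega
    rw [heq]; exact h2)
  omega

omit [Fintype V] in
lemma mem_Tset_lev (S : Finset V) {z : V} (hz : z ∈ S) : z ∈ Tset o S (lev o S z) := by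
  rw [lev, dif_pos (lev_exists o S hz)]
  rcases Nat.eq_zero_or_pos (Nat.find (lev_exists o S hz)) with h0 | hpos
  · rw [h0]; exact hz
  · have := Nat.find_min (lev_exists o S hz) (m := Nat.find (lev_exists o S hz) - 1) (by omega)
    push_neg at this
    have heq : Nat.find (lev_exists o S hz) - 1 + 1 = Nat.find (lev_exists o S hz) := by omega
    rwa [heq] at this

omit [Fintype V] in
lemma notmem_Tset_lev_succ (S : Finset V) {z : V} (hz : z ∈ S) :
    z ∉ Tset o S (lev o S z + 1) := by
  rw [lev, dif_pos (lev_exists o S hz)]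
  exact Nat.find_spec (lev_exists o S hz)

omit [Fintype V] in
lemma lev_min (S : Finset V) {z : V} (hz : z ∈ S) :
    ∀ w ∈ Tset o S (lev o S z), o (lev o S z) z ≤ o (lev o S z) w := by
  have hmem := mem_Tset_lev o S hz
  have hnot := notmem_Tset_lev_succ o S hz
  rw [Tset] at hnot
  have hne : (Tset o S (lev o S z)).Nonempty := ⟨z, hmem⟩
  rw [dif_pos hne] at hnot
  have hspec := Classical.choose_spec (Finset.exists_min_image (Tset o S (lev o S z))
    (o (lev o S z)) hne)
  have hzeq : z = Classical.choose (Finset.exists_min_image (Tset o S (lev o S z))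
      (o (lev o S z)) hne) := by
    by_contra hne'
    exact hnot (Finset.mem_erase.mpr ⟨hne', hmem⟩)
  intro w hw
  have h3 := hspec.2 w hw
  rwa [← hzeq] at h3

omit [Fintype V] in
lemma mem_Tset_of_le_lev (S : Finset V) {z : V} (hz : z ∈ S) {J : ℕ} (hJ : J ≤ lev o S z) :
    z ∈ Tset o S J :=
  Tset_subset o S hJ (mem_Tset_lev o S hz)

omit [Fintype V] in
lemma lev_lt_of_lt (S : Finset V) {z w : V} (hz : z ∈ S) (hw : w ∈ S)
    (hlt : o (lev o S z) w < o (lev o S z) z) : lev o S w < lev o S z := by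
  by_contra hge
  push_neg at hge
  have hwT : w ∈ Tset o S (lev o S z) := mem_Tset_of_le_lev o S hw hge
  exact absurd (lev_min o S hz w hwT) (by omega)

end Greedy


section WalkSetup

def Phi (S : Finset V) : SimpleGraph V :=
  SimpleGraph.fromEdgeSet {e | (e ∈ ⋃ i ∈ Finset.range k, F i) ∧ ∀ w ∈ e, w ∉ (S : Set V)}

def EC (S : Finset V) (x y : V) : Prop :=
  ∃ t, t < k ∧ s(x, y) ∈ F t ∧ (x ∈ S → lev o S x < t) ∧ (y ∈ S → lev o S y < t)

omit [Fintype V] in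
lemma EC_symm {S : Finset V} {x y : V} (h : EC F k o S x y) : EC F k o S y x := by
  obtain ⟨t, h1, h2, h3, h4⟩ := h
  exact ⟨t, h1, by rwa [Sym2.eq_swap], h4, h3⟩

lemma EC_ne (hF : ∀ i < k, F i = earliestForest (Gseq G F i) (o i))
    {S : Finset V} {x y : V} (h : EC F k o S x y) : x ≠ y := by
  obtain ⟨t, h1, h2, -, -⟩ := h
  exact ((Gseq G F t).mem_edgeSet.mp (F_subset_edgeSet G F k o hF h1 h2)).ne

lemma EC_adj_Phi (hF : ∀ i < k, F i = earliestForest (Gseq G F i) (o i))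
    {S : Finset V} {x y : V} (h : EC F k o S x y)
    (hx : x ∉ S) (hy : y ∉ S) : (Phi F k S).Adj x y := by
  obtain ⟨t, h1, h2, -, -⟩ := h
  rw [Phi, SimpleGraph.fromEdgeSet_adj]
  refine ⟨⟨?_, ?_⟩, EC_ne G F k o hF ⟨t, h1, h2, fun hc => absurd hc hx, fun hc => absurd hc hy⟩⟩
  · simp only [Set.mem_iUnion]
    exact ⟨t, Finset.mem_range.mpr h1, h2⟩
  · intro w hw
    rcases Sym2.mem_iff.mp hw with rfl | rfl
    · exact hx
    · exact hy

lemma reach_of_chain_noS (hF : ∀ i < k, F i = earliestForest (Gseq G F i) (o i))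
    {S : Finset V} :
    ∀ (L : List V) (x y : V), List.Chain' (EC F k o S) L → L.head? = some x →
      L.getLast? = some y → (∀ w ∈ L, w ∉ S) → (Phi F k S).Reachable x y := by
  intro L
  induction L with
  | nil => intro x y _ hx _ _; simp at hx
  | cons a t IH =>
    intro x y hch hx hy hno
    have hax : a = x := by simpa using hx
    subst hax
    cases t with
    | nil =>
      have : a = y := by simpa using hy
      subst this; exact SimpleGraph.Reachable.refl a
    | cons b t' =>
      have hch' := List.isChain_cons_cons.mp hch
      have hadj : (Phi F k S).Adj a b :=
        EC_adj_Phi G F k o hF hch'.1 (hno a (by simp)) (hno b (by simp))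
      refine hadj.reachable.trans (IH b y hch'.2 rfl ?_ ?_)
      · rw [← hy, List.getLast?_cons_cons]
      · intro w hw; exact hno w (List.mem_cons_of_mem a hw)

end WalkSetup

section ListHelpers

omit [Fintype V] in
lemma chain'_imp_mem {α : Type*} {R R' : α → α → Prop} :
    ∀ (l : List α), List.Chain' R l → (∀ x ∈ l, ∀ y ∈ l, R x y → R' x y) →
      List.Chain' R' l := by
  intro l
  induction l with
  | nil => intro _ _; exact List.isChain_nil
  | cons a t IH =>
    intro hch himp
    rcases t with - | ⟨b, t'⟩
    · exact List.isChain_singleton a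
    · have hch' := List.isChain_cons_cons.mp hch
      exact List.isChain_cons_cons.mpr ⟨himp a (by simp) b (by simp) hch'.1,
        IH hch'.2 (fun x hx y hy h =>
          himp x (List.mem_cons_of_mem a hx) y (List.mem_cons_of_mem a hy) h)⟩

omit [Fintype V] in
lemma glue_chain' {α : Type*} {R : α → α → Prop} {l₁ l₂ : List α} {c : α}
    (h1 : List.Chain' R l₁) (h2 : List.Chain' R l₂)
    (hl1 : l₁.getLast? = some c) (hl2 : l₂.head? = some c) :
    List.Chain' R (l₁ ++ l₂.tail) := by
  cases l₂ with
  | nil => simp at hl2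
  | cons b t =>
    have hbc : b = c := by simpa using hl2
    refine List.IsChain.append h1 (List.IsChain.tail h2) ?_
    intro x hx y hy
    have hxc : x = b := by rw [hl1] at hx; rw [hbc]; exact (by simpa using hx : c = x).symm
    subst hxc
    simp only [List.tail_cons] at hy
    exact (List.isChain_cons.mp h2).1 y hy

omit [Fintype V] in
lemma glue_getLast? {α : Type*} {l₁ l₂ : List α} {c : α}
    (hl1 : l₁.getLast? = some c) (hl2 : l₂.head? = some c) :
    (l₁ ++ l₂.tail).getLast? = l₂.getLast? := by
  cases l₂ with
  | nil => simp at hl2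
  | cons b t =>
    have hbc : b = c := by simpa using hl2
    subst hbc
    cases t with
    | nil => simpa using hl1
    | cons d t' =>
      rw [List.tail_cons, List.getLast?_append_cons, List.getLast?_cons_cons]

omit [Fintype V] in
lemma head?_append_left {α : Type*} {l₁ l₂ : List α} (h : l₁ ≠ []) :
    (l₁ ++ l₂).head? = l₁.head? := by
  cases l₁ with
  | nil => exact absurd rfl h
  | cons a t => rfl

end ListHelpers


section Mu

open scoped Classical

noncomputable def mu (S : Finset V) (L : List V) : ℕ :=
  (L.map (fun z => if z ∈ S then (2 * Fintype.card V + 1) ^ (lev o S z) else 0)).sum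

lemma mu_append (S : Finset V) (l₁ l₂ : List V) :
    mu o S (l₁ ++ l₂) = mu o S l₁ + mu o S l₂ := by
  rw [mu, List.map_append, List.sum_append]; rfl

lemma mu_cons (S : Finset V) (a : V) (l : List V) :
    mu o S (a :: l) = (if a ∈ S then (2 * Fintype.card V + 1) ^ (lev o S a) else 0)
      + mu o S l := by
  rw [mu, List.map_cons, List.sum_cons]; rfl

lemma mu_nil (S : Finset V) : mu o S [] = 0 := by simp [mu]

lemma mu_single (S : Finset V) (a : V) :
    mu o S [a] = if a ∈ S then (2 * Fintype.card V + 1) ^ (lev o S a) else 0 := by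
  rw [mu_cons, mu_nil, Nat.add_zero]

lemma mu_lt_pow (S : Finset V) (l : List V) {J : ℕ}
    (hlev : ∀ w ∈ l, w ∈ S → lev o S w < J)
    (hlen : l.length ≤ 2 * Fintype.card V) :
    mu o S l < (2 * Fintype.card V + 1) ^ J := by
  rcases J with _ | J'
  · have h0 : mu o S l = 0 := by
      rw [mu]
      apply List.sum_eq_zero
      intro t ht
      simp only [List.mem_map] at ht
      obtain ⟨w, hw, rfl⟩ := ht
      by_cases hwS : w ∈ S
      · exact absurd (hlev w hw hwS) (Nat.not_lt_zero _)
      · simp [hwS]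
    simp [h0]
  · rw [mu]
    calc (l.map (fun z => if z ∈ S then (2 * Fintype.card V + 1) ^ (lev o S z) else 0)).sum
        ≤ (l.map (fun z => if z ∈ S then (2 * Fintype.card V + 1) ^ (lev o S z) else 0)).length
            • ((2 * Fintype.card V + 1) ^ J') := by
          apply List.sum_le_card_nsmul
          intro t ht
          simp only [List.mem_map] at ht
          obtain ⟨w, hw, rfl⟩ := ht
          by_cases hwS : w ∈ S
          · simp only [if_pos hwS]
            exact Nat.pow_le_pow_right (by omega)
              (by have := hlev w hw hwS; omega)
          · simp [hwS]
      _ ≤ (2 * Fintype.card V) * ((2 * Fintype.card V + 1) ^ J') := by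
          rw [List.length_map, smul_eq_mul]
          exact Nat.mul_le_mul_right _ hlen
      _ < (2 * Fintype.card V + 1) ^ (J' + 1) := by
          have hp : 0 < (2 * Fintype.card V + 1) ^ J' :=
            pow_pos (by omega) J'
          rw [pow_succ]
          nlinarith [hp]

end Mu

section LevInj

omit [Fintype V] in
lemma lev_inj (hscan : ∀ i < k, IsScanOrder (Gseq G F i) (o i)) {S : Finset V}
    (hcard : S.card ≤ k) {z w : V} (hz : z ∈ S) (hw : w ∈ S)
    (h : lev o S z = lev o S w) : z = w := by
  have h1 : o (lev o S z) z ≤ o (lev o S z) w := by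
    apply lev_min o S hz
    rw [h]; exact mem_Tset_lev o S hw
  have h2 : o (lev o S z) w ≤ o (lev o S z) z := by
    have := lev_min o S hw z (by rw [← h]; exact mem_Tset_lev o S hz)
    rwa [← h] at this
  exact (hscan _ (lt_of_lt_of_le (lev_lt_card o S hz) hcard)).1 (le_antisymm h1 h2)

end LevInj

section WalkLem

variable (hscan : ∀ i < k, IsScanOrder (Gseq G F i) (o i))
variable (hF : ∀ i < k, F i = earliestForest (Gseq G F i) (o i))

include hscan hF in
lemma walklem {S : Finset V} (hcard : S.card < k) :
    ∀ (N : ℕ) (L : List V), mu o S L ≤ N → List.Chain' (EC F k o S) L →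
      ∀ x y, L.head? = some x → L.getLast? = some y → x ∉ S → y ∉ S →
      (Phi F k S).Reachable x y := by
  intro N
  induction N using Nat.strong_induction_on with
  | _ N IH =>
  intro L hmu hch x y hx hy hxS hyS
  by_cases hno : ∀ w ∈ L, w ∉ S
  · exact reach_of_chain_noS G F k o hF L x y hch hx hy hno
  push_neg at hno
  obtain ⟨z0, hz0L, hz0S⟩ := hno
  classical
  obtain ⟨z, hzF, hzmax⟩ := Finset.exists_max_image (S.filter (· ∈ L)) (lev o S)
    ⟨z0, Finset.mem_filter.mpr ⟨hz0S, hz0L⟩⟩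
  have hzS : z ∈ S := (Finset.mem_filter.mp hzF).1
  have hzL : z ∈ L := (Finset.mem_filter.mp hzF).2
  set J := lev o S z with hJdef
  have hJcard : J < S.card := lev_lt_card o S hzS
  have hJk : J < k := hJcard.trans hcard
  obtain ⟨L₁, L₂, hLsplit⟩ := List.append_of_mem hzL
  have hL₁ne : L₁ ≠ [] := by
    rintro rfl
    rw [hLsplit] at hx
    simp only [List.nil_append, List.head?_cons, Option.some.injEq] at hx
    exact hxS (hx ▸ hzS)
  have hL₂ne : L₂ ≠ [] := by
    rintro rfl
    rw [hLsplit, List.getLast?_concat] at hy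
    simp only [Option.some.injEq] at hy
    exact hyS (hy ▸ hzS)
  obtain ⟨L₁', a, rfl⟩ : ∃ l c, L₁ = l ++ [c] := by
    rcases List.eq_nil_or_concat L₁ with h | ⟨l, c, h⟩
    · exact absurd h hL₁ne
    · exact ⟨l, c, by simpa using h⟩
  obtain ⟨b, L₂', rfl⟩ : ∃ c t, L₂ = c :: t := by
    cases L₂ with
    | nil => exact absurd rfl hL₂ne
    | cons c t => exact ⟨c, t, rfl⟩
  subst hLsplit
  -- split the chain
  have hsplit := List.isChain_split.mp hch
  have hECzb : EC F k o S z b := (List.isChain_cons_cons.mp hsplit.2).1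
  have hsplit2 := List.isChain_split.mp
    (show List.IsChain (EC F k o S) (L₁' ++ a :: [z]) by
      simpa [List.append_assoc] using hsplit.1)
  have hECaz : EC F k o S a z := (List.isChain_cons_cons.mp hsplit2.2).1
  have hPch : List.Chain' (EC F k o S) (L₁' ++ [a]) := hsplit2.1
  -- edges in Gseq J
  obtain ⟨t₁, ht₁k, he₁, -, hc₁⟩ := hECaz
  have hJt₁ : J < t₁ := hc₁ hzS
  have hadj_az : (Gseq G F J).Adj a z := (Gseq G F J).mem_edgeSet.mp
    (edgeSet_Gseq_anti G F (le_of_lt hJt₁) (F_subset_edgeSet G F k o hF ht₁k he₁))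
  have hnF_az : s(a, z) ∉ F J := F_notin_Gseq G F hJt₁ _
    (F_subset_edgeSet G F k o hF ht₁k he₁)
  obtain ⟨t₂, ht₂k, he₂, hc₂, -⟩ := hECzb
  have hJt₂ : J < t₂ := hc₂ hzS
  have hadj_zb : (Gseq G F J).Adj z b := (Gseq G F J).mem_edgeSet.mp
    (edgeSet_Gseq_anti G F (le_of_lt hJt₂) (F_subset_edgeSet G F k o hF ht₂k he₂))
  have hnF_zb : s(z, b) ∉ F J := F_notin_Gseq G F hJt₂ _
    (F_subset_edgeSet G F k o hF ht₂k he₂)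
  -- chains
  obtain ⟨La, ρa, hLa_h, hLa_l, hLa_min, hLa_r, hLa_ch, hLa_nd, hLa_bd, hLa_tail⟩ :=
    chain_exists G F k o hF hscan hJk a
  obtain ⟨Lb, ρb, hLb_h, hLb_l, hLb_min, hLb_r, hLb_ch, hLb_nd, hLb_bd, hLb_tail⟩ :=
    chain_exists G F k o hF hscan hJk b
  have hρ : ρa = ρb := min_unique G F k o hF hscan hJk hLa_min hLb_min
    (hLa_r.symm.trans (hadj_az.reachable.trans (hadj_zb.reachable.trans hLb_r)))
  have hLa_ne : La ≠ [] := by cases La with | nil => simp at hLa_h | cons _ _ => simp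
  have hLb_ne : Lb ≠ [] := by cases Lb with | nil => simp at hLb_h | cons _ _ => simp
  -- level bounds on chain members
  have key : ∀ (c : V) (Lc : List V), Lc.head? = some c → c ∈ ((L₁' ++ [a]) ++ z :: b :: L₂') →
      (Gseq G F J).Adj c z → s(c, z) ∉ F J →
      (Lc.tail = [] ∨ ∃ p, (Gseq G F J).Adj c p ∧ s(p, c) ∈ F J ∧
        (∀ nb, (Gseq G F J).Adj c nb → o J p ≤ o J nb) ∧
        ∀ x' ∈ Lc.tail, o J x' ≤ o J p) →
      ∀ x' ∈ Lc, x' ∈ S → lev o S x' < J := by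
    intro c Lc hLc_h hcL hadj hnF htail x' hx' hx'S
    obtain ⟨tc, rfl⟩ : ∃ t, Lc = c :: t := by
      cases Lc with
      | nil => simp at hLc_h
      | cons d t =>
        have hdc : d = c := by simpa using hLc_h
        exact ⟨t, by rw [hdc]⟩
    rcases List.mem_cons.mp hx' with rfl | hx'tail
    · -- x' = c : old occurrence, use maximality and injectivity
      have hlev_le : lev o S x' ≤ J :=
        hzmax x' (Finset.mem_filter.mpr ⟨hx'S, hcL⟩)
      rcases lt_or_eq_of_le hlev_le with h | h
      · exact h
      · exact absurd (lev_inj G F k o hscan (le_of_lt hcard) hx'S hzS h) hadj.ne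
    · -- x' in tail
      rcases htail with htnil | ⟨p, hpadj, hpF, hpmin, hptail⟩
      · simp only [List.tail_cons] at htnil
        rw [htnil] at hx'tail; simp at hx'tail
      · have h1 : o J x' ≤ o J p := hptail x' hx'tail
        have hpz : p ≠ z := by
          rintro rfl
          exact hnF (by rwa [Sym2.eq_swap] at hpF)
        have h2 : o J p ≤ o J z := hpmin z hadj
        have h3 : o J p < o J z := lt_of_le_of_ne h2 (fun he => hpz ((hscan J hJk).1 he))
        exact lev_lt_of_lt o S hzS hx'S (lt_of_le_of_lt h1 h3)
  have key_a : ∀ x' ∈ La, x' ∈ S → lev o S x' < J :=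
    key a La hLa_h (by simp) hadj_az hnF_az hLa_tail
  have key_b : ∀ x' ∈ Lb, x' ∈ S → lev o S x' < J :=
    key b Lb hLb_h (by simp) hadj_zb.symm (by rwa [Sym2.eq_swap]) hLb_tail
  -- chains as EC-chains
  have hECLa : List.Chain' (EC F k o S) La :=
    chain'_imp_mem La hLa_ch (fun x1 hx1 y1 hy1 hr =>
      ⟨J, hJk, hr.1, fun hs => key_a x1 hx1 hs, fun hs => key_a y1 hy1 hs⟩)
  have hECLbrev : List.Chain' (EC F k o S) Lb.reverse := by
    refine List.isChain_reverse.mpr ?_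
    exact chain'_imp_mem Lb hLb_ch (fun x1 hx1 y1 hy1 hr =>
      ⟨J, hJk, by rw [Sym2.eq_swap]; exact hr.1, fun hs => key_b y1 hy1 hs, fun hs => key_b x1 hx1 hs⟩)
  -- detour D
  set D := La ++ Lb.reverse.tail with hDdef
  have hrev_h : Lb.reverse.head? = some ρa := by
    rw [List.head?_reverse, hLb_l, hρ]
  have hD_ch : List.Chain' (EC F k o S) D := glue_chain' hECLa hECLbrev hLa_l hrev_h
  have hD_h : D.head? = some a := by rw [hDdef, head?_append_left hLa_ne, hLa_h]
  have hD_l : D.getLast? = some b := by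
    rw [hDdef, glue_getLast? hLa_l hrev_h, List.getLast?_reverse, hLb_h]
  have key_D : ∀ x' ∈ D, x' ∈ S → lev o S x' < J := by
    intro x' hx' hx'S
    rcases List.mem_append.mp hx' with h | h
    · exact key_a x' h hx'S
    · exact key_b x' (List.mem_reverse.mp (List.mem_of_mem_tail h)) hx'S
  have hlenD : D.length ≤ 2 * Fintype.card V := by
    have h1 : La.length ≤ Fintype.card V := hLa_nd.length_le_card
    have h2 : Lb.length ≤ Fintype.card V := hLb_nd.length_le_card
    have h3 : Lb.reverse.tail.length ≤ Lb.length := by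
      rw [List.length_tail, List.length_reverse]; omega
    rw [hDdef, List.length_append]
    omega
  clear_value D
  -- assemble the new list
  set P := L₁' ++ [a] with hPdef
  have hPne : P ≠ [] := by simp [hPdef]
  have hP_l : P.getLast? = some a := List.getLast?_concat
  have hP_h : P.head? = some x := by
    rw [head?_append_left hPne] at hx; exact hx
  have hM_ch : List.Chain' (EC F k o S) (P ++ D.tail) := glue_chain' hPch hD_ch hP_l hD_h
  have hM_l : (P ++ D.tail).getLast? = some b := by
    rw [glue_getLast? hP_l hD_h]; exact hD_l
  have hM_ne : P ++ D.tail ≠ [] := by simp [hPdef]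
  have hM_h : (P ++ D.tail).head? = some x := by
    rw [head?_append_left hPne]; exact hP_h
  set L' := (P ++ D.tail) ++ L₂' with hL'def
  have hL'_ch : List.Chain' (EC F k o S) L' := by
    have hg := glue_chain' hM_ch (hsplit.2.tail) hM_l
      (rfl : (b :: L₂').head? = some b)
    show List.Chain' (EC F k o S) ((P ++ D.tail) ++ L₂')
    rw [List.append_assoc]
    simpa using hg
  have hL'_h : L'.head? = some x := by
    rw [hL'def, head?_append_left hM_ne]; exact hM_h
  have hy' : (b :: L₂').getLast? = some y := by
    rw [List.getLast?_append_cons, List.getLast?_cons_cons] at hy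
    exact hy
  have hL'_l : L'.getLast? = some y := by
    have h1 : ((P ++ D.tail) ++ (b :: L₂').tail).getLast? = (b :: L₂').getLast? :=
      glue_getLast? hM_l rfl
    simp only [List.tail_cons] at h1
    rw [hL'def, h1]; exact hy'
  -- measure decrease
  have hmuz : mu o S [z] = (2 * Fintype.card V + 1) ^ J := by
    rw [mu_single, if_pos hzS]
  have hkey : mu o S D.tail < (2 * Fintype.card V + 1) ^ J + mu o S [b] := by
    by_cases hDt : D.tail = []
    · rw [hDt, mu_nil]
      have := pow_pos (show 0 < 2 * Fintype.card V + 1 by omega) J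
      omega
    · have hlast : D.tail.getLast? = some b := by
        cases D with
        | nil => simp at hD_h
        | cons d ds =>
          simp only [List.tail_cons] at hDt ⊢
          cases ds with
          | nil => exact absurd rfl hDt
          | cons e es =>
            rw [← List.getLast?_cons_cons (a := d)]; exact hD_l
      obtain ⟨l', c, hc⟩ := (List.eq_nil_or_concat D.tail).resolve_left hDt
      have hcb : c = b := by
        rw [hc, List.concat_eq_append, List.getLast?_concat] at hlast
        simpa using hlast
      subst hcb
      rw [hc, List.concat_eq_append, mu_append]
      have hl'bound : mu o S l' < (2 * Fintype.card V + 1) ^ J := by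
        apply mu_lt_pow
        · intro w hw hwS
          refine key_D w ?_ hwS
          have hwt : w ∈ D.tail := by
            rw [hc, List.concat_eq_append]; exact List.mem_append_left _ hw
          exact List.mem_of_mem_tail hwt
        · have hlen1 : l'.length + 1 = D.tail.length := by
            rw [hc]; simp
          have hlen2 : D.tail.length ≤ D.length := by
            rw [List.length_tail]; omega
          omega
      omega
  have hmu_eqL : mu o S (P ++ z :: b :: L₂')
      = mu o S P + (mu o S [z] + (mu o S [b] + mu o S L₂')) := by
    simp only [mu, List.map_append, List.sum_append, List.map_cons, List.sum_cons,
      List.map_nil, List.sum_nil]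
    omega
  have hmu_eqL' : mu o S L' = mu o S P + (mu o S D.tail + mu o S L₂') := by
    rw [hL'def]
    simp only [mu, List.map_append, List.sum_append, List.map_cons, List.sum_cons,
      List.map_nil, List.sum_nil]
    omega
  have hmuLval : mu o S (P ++ z :: b :: L₂') ≤ N := hmu
  have hfin : mu o S L' < N := by
    rw [hmu_eqL'] 
    rw [hmu_eqL] at hmuLval
    rw [hmuz] at hmuLval
    omega
  exact IH (mu o S L') hfin L' le_rfl hL'_ch x y hL'_h hL'_l hxS hyS

include hscan hF in
lemma main_conn {S : Finset V} (hcard : S.card < k)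
    {u v : V} (hu : u ∉ S) (hv : v ∉ S) (huv : G.Adj u v) :
    (Phi F k S).Reachable u v := by
  by_cases hUF : ∃ t, t < k ∧ s(u, v) ∈ F t
  · obtain ⟨t, htk, hte⟩ := hUF
    exact (EC_adj_Phi G F k o hF
      ⟨t, htk, hte, fun h => absurd h hu, fun h => absurd h hv⟩ hu hv).reachable
  · push_neg at hUF
    have hk : 0 < k := by omega
    have hK : k - 1 < k := by omega
    have hedge : s(u, v) ∈ (Gseq G F (k-1)).edgeSet := by
      rw [edgeSet_Gseq]
      refine ⟨G.mem_edgeSet.mpr huv, ?_⟩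
      intro hmem
      simp only [Set.mem_iUnion] at hmem
      obtain ⟨t, ht, hte⟩ := hmem
      exact absurd hte (hUF t (by have := Finset.mem_range.mp ht; omega))
    have hadj : (Gseq G F (k-1)).Adj u v := (Gseq G F (k-1)).mem_edgeSet.mp hedge
    obtain ⟨La, ρa, hLa_h, hLa_l, hLa_min, hLa_r, hLa_ch, -, -, -⟩ :=
      chain_exists G F k o hF hscan hK u
    obtain ⟨Lb, ρb, hLb_h, hLb_l, hLb_min, hLb_r, hLb_ch, -, -, -⟩ :=
      chain_exists G F k o hF hscan hK v
    have hρ : ρa = ρb := min_unique G F k o hF hscan hK hLa_min hLb_min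
      (hLa_r.symm.trans (hadj.reachable.trans hLb_r))
    have hlev : ∀ w, w ∈ S → lev o S w < k - 1 := fun w hw => by
      have := lev_lt_card o S hw
      have hc : 0 < S.card := Finset.card_pos.mpr ⟨w, hw⟩
      omega
    have hECa : List.Chain' (EC F k o S) La :=
      chain'_imp_mem La hLa_ch (fun x1 hx1 y1 hy1 hr =>
        ⟨k-1, hK, hr.1, fun hs => hlev _ hs, fun hs => hlev _ hs⟩)
    have hECbrev : List.Chain' (EC F k o S) Lb.reverse := by
      refine List.isChain_reverse.mpr ?_
      exact chain'_imp_mem Lb hLb_ch (fun x1 hx1 y1 hy1 hr =>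
        ⟨k-1, hK, by rw [Sym2.eq_swap]; exact hr.1, fun hs => hlev _ hs, fun hs => hlev _ hs⟩)
    have hLa_ne : La ≠ [] := by cases La with | nil => simp at hLa_h | cons _ _ => simp
    have hrev_h : Lb.reverse.head? = some ρa := by rw [List.head?_reverse, hLb_l, hρ]
    have hD_ch : List.Chain' (EC F k o S) (La ++ Lb.reverse.tail) :=
      glue_chain' hECa hECbrev hLa_l hrev_h
    have hD_h : (La ++ Lb.reverse.tail).head? = some u := by
      rw [head?_append_left hLa_ne, hLa_h]
    have hD_l : (La ++ Lb.reverse.tail).getLast? = some v := by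
      rw [glue_getLast? hLa_l hrev_h, List.getLast?_reverse, hLb_h]
    exact walklem G F k o hF hscan hcard (mu o S (La ++ Lb.reverse.tail)) _
      le_rfl hD_ch u v hD_h hD_l hu hv

include hF in
lemma phi_reach_lift {S : Finset V} {x y : V}
    (h : (Phi F k S).Reachable x y) (hx' : x ∈ ((↑S : Set V)ᶜ)) :
    ∀ (hy' : y ∈ ((↑S : Set V)ᶜ)),
      ((SimpleGraph.fromEdgeSet (⋃ i ∈ Finset.range k, F i)).induce
        ((↑S : Set V)ᶜ)).Reachable ⟨x, hx'⟩ ⟨y, hy'⟩ := by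
  obtain ⟨w⟩ := h
  induction w with
  | nil => intro hy'; rfl
  | @cons x z y h p IH =>
    intro hy'
    have hPhi := h
    rw [Phi, SimpleGraph.fromEdgeSet_adj] at hPhi
    have hz' : z ∈ ((↑S : Set V)ᶜ) := by
      have := hPhi.1.2 z (by rw [Sym2.mem_iff]; right; rfl)
      simpa using this
    have hadj : ((SimpleGraph.fromEdgeSet (⋃ i ∈ Finset.range k, F i)).induce
        ((↑S : Set V)ᶜ)).Adj ⟨x, hx'⟩ ⟨z, hz'⟩ := by
      rw [SimpleGraph.comap_adj]
      rw [SimpleGraph.fromEdgeSet_adj]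
      exact ⟨hPhi.1.1, hPhi.2⟩
    exact hadj.reachable.trans (IH hz' hy')

end WalkLem

end ScanProof

/-- With `G_0 = G` and, for `i = 1, …, k`, `o_i` a scan order of `G_(i-1)` and `F_i` the
earliest-neighbor forest of `G_(i-1)` with respect to `o_i`, the graph with edge set
`F_1 ∪ ⋯ ∪ F_k` is `k`-connected iff `G` is `k`-connected. -/
theorem scanForests_kConnected_iff {V : Type*} [Fintype V] (G : SimpleGraph V)
    (k : ℕ) (hk : 0 < k)
    (o : ℕ → V → ℕ) (F : ℕ → Set (Sym2 V))
    (hscan : ∀ i < k, IsScanOrder (Gseq G F i) (o i))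
    (hF : ∀ i < k, F i = earliestForest (Gseq G F i) (o i)) :
    IsKConnected k (SimpleGraph.fromEdgeSet (⋃ i ∈ Finset.range k, F i)) ↔
      IsKConnected k G := by
  constructor
  · rintro ⟨hcard, hconn⟩
    refine ⟨hcard, fun S hS => ?_⟩
    refine (hconn S hS).mono ?_
    intro a b hab
    rw [SimpleGraph.comap_adj] at hab ⊢
    rw [SimpleGraph.fromEdgeSet_adj] at hab
    obtain ⟨hU, -⟩ := hab
    simp only [Set.mem_iUnion] at hU
    obtain ⟨i, hi, hei⟩ := hU
    exact G.mem_edgeSet.mp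
      (ScanProof.F_subset_G G F k o hF (Finset.mem_range.mp hi) hei)
  · rintro ⟨hcard, hconn⟩
    refine ⟨hcard, fun S hS => ?_⟩
    have hSk : S.card < k := by omega
    have hGc := hconn S hS
    rw [SimpleGraph.connected_iff] at hGc ⊢
    refine ⟨?_, hGc.2⟩
    intro X Y
    obtain ⟨w⟩ := hGc.1 X Y
    induction w with
    | nil => exact SimpleGraph.Reachable.refl _
    | @cons A C B h p IH =>
      have hAS : (A : V) ∉ S := fun hc => A.2 (Finset.mem_coe.mpr hc)
      have hCS : (C : V) ∉ S := fun hc => C.2 (Finset.mem_coe.mpr hc)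
      have hGadj : G.Adj ↑A ↑C := by rwa [SimpleGraph.comap_adj] at h
      exact (ScanProof.phi_reach_lift G F k o hF
        (ScanProof.main_conn G F k o hF hscan hSk hAS hCS hGadj) A.2 C.2).trans IH
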